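/- arXiv:2203.08317 — 4 statements merged into one kernel-verified Lean document; each statement's English description precedes it below -/
import Mathlib

section
/- Let K : ℝ → ℝ be a bounded, measurable, integrable and square-integrable kernel, and suppose each density p_i is square-integrable, each convolution K_{σ_i} * p_i is square-integrable, and each difference b_i = p_i − p_T is square-integrable. Then the mean integrated squared error of the sliding-window kernel density estimator satisfies the finite-sample bound ∫_ℝ E[(ĥ(x) − p_T(x))²] dx ≤ Σ_{i=1}^T α_i²·R(K)/(n_i·σ_i) + (2T−1)·Σ_{i=1}^T α_i²·R(b_i) + (2T−1)·Σ_{i=1}^T α_i²·R(K_{σ_i} * p_i − p_i). (Note b_T = 0, so the second sum effectively runs over i = 1, …, T−1; this is the non-asymptotic inequality underlying the paper's AMISE upper bound of Theorem 1.) -/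
open MeasureTheory ProbabilityTheory Filter Real

/-- The rescaled kernel `K_σ(x) = (1/σ)·K(x/σ)`. -/
noncomputable def scaledKernel (K : ℝ → ℝ) (σ : ℝ) : ℝ → ℝ := fun u => (1 / σ) * K (u / σ)

/-- `R(f) = ∫ f(x)² dx`. -/
noncomputable def Rquad (f : ℝ → ℝ) : ℝ := ∫ x : ℝ, (f x) ^ 2

/-- Convolution `(K ⋆ p)(x) = ∫ K(x − y)·p(y) dy`. -/
noncomputable def convKP (K p : ℝ → ℝ) : ℝ → ℝ := fun x => ∫ y : ℝ, K (x - y) * p y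


open scoped ENNReal NNReal

lemma swm_integrable_of_integral_eq_one {f : ℝ → ℝ} (h : ∫ x, f x = 1) : Integrable f := by
  by_contra hc
  rw [integral_undef hc] at h
  norm_num at h

lemma swm_expect_comp {Ω : Type*} [MeasurableSpace Ω] {μ : Measure Ω}
    {X : Ω → ℝ} (hX : Measurable X) {p : ℝ → ℝ} (hp : Measurable p) (hp0 : ∀ x, 0 ≤ p x)
    (hd : Measure.map X μ = volume.withDensity (fun x => ENNReal.ofReal (p x)))
    (f : ℝ → ℝ) (hf : Measurable f) :
    ∫ ω, f (X ω) ∂μ = ∫ y, f y * p y := by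
  rw [← integral_map hX.aemeasurable hf.aestronglyMeasurable, hd]
  have h1 : (fun x => ENNReal.ofReal (p x))
      = fun x => ((fun x => (p x).toNNReal) x : ℝ≥0∞) := rfl
  rw [h1, integral_withDensity_eq_integral_smul hp.real_toNNReal f]
  congr 1
  funext y
  simp [NNReal.smul_def, Real.coe_toNNReal _ (hp0 y), mul_comm]

lemma swm_scaledKernel_meas {K : ℝ → ℝ} (hK : Measurable K) (σ : ℝ) :
    Measurable (scaledKernel K σ) := by
  unfold scaledKernel
  fun_prop

lemma swm_scaledKernel_bound {K : ℝ → ℝ} {C : ℝ} (hC : ∀ x, |K x| ≤ C) {σ : ℝ} (hσ : 0 < σ) :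
    ∀ u, |scaledKernel K σ u| ≤ C / σ := by
  intro u
  unfold scaledKernel
  rw [abs_mul, abs_of_pos (by positivity : (0:ℝ) < 1/σ)]
  rw [div_eq_mul_inv C σ, mul_comm C σ⁻¹, one_div]
  exact mul_le_mul_of_nonneg_left (hC _) (by positivity)

lemma swm_integrable_sq_scaledKernel {K : ℝ → ℝ} (hKsq : Integrable (fun x => (K x) ^ 2))
    {σ : ℝ} (hσ : 0 < σ) : Integrable (fun x => (scaledKernel K σ x) ^ 2) := by
  unfold scaledKernel
  have : (fun x : ℝ => ((1/σ) * K (x / σ)) ^ 2)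
      = fun x => (1/σ)^2 * ((fun u => (K u)^2) (x / σ)) := by
    funext x; ring
  rw [this]
  exact (hKsq.comp_div hσ.ne').const_mul _

lemma swm_Rquad_scaledKernel {K : ℝ → ℝ} {σ : ℝ} (hσ : 0 < σ) :
    Rquad (scaledKernel K σ) = Rquad K / σ := by
  unfold Rquad scaledKernel
  have h1 : (fun x : ℝ => ((1/σ) * K (x / σ)) ^ 2)
      = fun x => (1/σ)^2 * ((fun u => (K u)^2) (x / σ)) := by
    funext x; ring
  rw [h1, integral_const_mul, MeasureTheory.Measure.integral_comp_div (fun u => (K u)^2) σ,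
    abs_of_pos hσ, smul_eq_mul]
  field_simp

lemma swm_var_term {k p : ℝ → ℝ} (hk : Measurable k) {Ck : ℝ} (hkbd : ∀ x, |k x| ≤ Ck)
    (hksq : Integrable (fun x => (k x) ^ 2))
    (hp : Measurable p) (hp0 : ∀ x, 0 ≤ p x) (hpint : ∫ x, p x = 1) :
    Integrable (fun x => ∫ y, (k (x - y))^2 * p y)
    ∧ (∫ x, ∫ y, (k (x - y))^2 * p y) = Rquad k := by
  have hpi : Integrable p := swm_integrable_of_integral_eq_one hpint
  have hIx : ∀ x : ℝ, Integrable (fun y => (k (x - y))^2 * p y) := by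
    intro x
    refine hpi.bdd_mul (c := Ck^2) ?_ (ae_of_all _ fun y => ?_)
    · exact ((hk.comp (measurable_const.sub measurable_id)).pow_const 2).aestronglyMeasurable
    · rw [Real.norm_eq_abs, abs_of_nonneg (sq_nonneg _), ← sq_abs]
      exact pow_le_pow_left₀ (abs_nonneg _) (hkbd _) 2
  set G : ℝ → ℝ := fun x => ∫ y, (k (x - y))^2 * p y with hGdef
  have hG0 : ∀ x, 0 ≤ G x := fun x =>
    integral_nonneg (fun y => mul_nonneg (sq_nonneg _) (hp0 y))
  have hFm : StronglyMeasurable (fun z : ℝ × ℝ => (k (z.1 - z.2))^2 * p z.2) :=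
    (((hk.comp (measurable_fst.sub measurable_snd)).pow_const 2).mul
      (hp.comp measurable_snd)).stronglyMeasurable
  have hGm : StronglyMeasurable G := hFm.integral_prod_right'
  have hRk0 : 0 ≤ Rquad k := integral_nonneg (fun x => sq_nonneg _)
  have hlin : ∀ x : ℝ, ENNReal.ofReal (G x)
      = ∫⁻ y, ENNReal.ofReal ((k (x - y))^2 * p y) := by
    intro x
    exact ofReal_integral_eq_lintegral_ofReal (hIx x)
      (ae_of_all _ fun y => mul_nonneg (sq_nonneg _) (hp0 y))
  have hswap : ∫⁻ x, ∫⁻ y, ENNReal.ofReal ((k (x - y))^2 * p y)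
      = ∫⁻ y, ∫⁻ x, ENNReal.ofReal ((k (x - y))^2 * p y) := by
    apply lintegral_lintegral_swap
    exact (ENNReal.measurable_ofReal.comp hFm.measurable).aemeasurable
  have hinner : ∀ y : ℝ, (∫⁻ x, ENNReal.ofReal ((k (x - y))^2 * p y))
      = ENNReal.ofReal (Rquad k) * ENNReal.ofReal (p y) := by
    intro y
    have h1 : ∀ x : ℝ, ENNReal.ofReal ((k (x - y))^2 * p y)
        = ENNReal.ofReal ((k (x - y))^2) * ENNReal.ofReal (p y) := fun x =>
      ENNReal.ofReal_mul (sq_nonneg _)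
    simp_rw [h1]
    have hm : Measurable fun x : ℝ => ENNReal.ofReal ((k (x - y))^2) :=
      ENNReal.measurable_ofReal.comp ((hk.comp (measurable_id.sub measurable_const)).pow_const 2)
    rw [lintegral_mul_const _ hm]
    congr 1
    rw [lintegral_sub_right_eq_self (fun u => ENNReal.ofReal ((k u)^2)) y]
    rw [← ofReal_integral_eq_lintegral_ofReal hksq (ae_of_all _ fun u => sq_nonneg _)]
    rfl
  have hL : ∫⁻ x, ENNReal.ofReal (G x) = ENNReal.ofReal (Rquad k) := by
    simp_rw [hlin]
    rw [hswap]
    simp_rw [hinner]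
    have hm2 : Measurable fun y : ℝ => ENNReal.ofReal (p y) :=
      ENNReal.measurable_ofReal.comp hp
    rw [lintegral_const_mul _ hm2]
    rw [← ofReal_integral_eq_lintegral_ofReal hpi (ae_of_all _ hp0), hpint]
    simp
  have hGint : Integrable G := by
    refine ⟨hGm.aestronglyMeasurable, ?_⟩
    rw [hasFiniteIntegral_iff_ofReal (ae_of_all _ hG0), hL]
    exact ENNReal.ofReal_lt_top
  refine ⟨hGint, ?_⟩
  rw [integral_eq_lintegral_of_nonneg_ae (ae_of_all _ hG0) hGm.aestronglyMeasurable, hL,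
    ENNReal.toReal_ofReal hRk0]

lemma swm_sq_sum {T : ℕ} (t : Fin T) (u v : Fin T → ℝ) (hv : v t = 0) :
    (∑ i, u i + ∑ i, v i) ^ 2 ≤ (2 * (T:ℝ) - 1) * (∑ i, (u i)^2 + ∑ i, (v i)^2) := by
  classical
  have hT : 0 < T := t.pos
  set s : Finset (Fin T ⊕ Fin T) :=
    Finset.univ.image Sum.inl ∪ (Finset.univ.erase t).image Sum.inr with hs
  set w : Fin T ⊕ Fin T → ℝ := Sum.elim u v with hw
  have hdisj : Disjoint (Finset.univ.image (Sum.inl : Fin T → Fin T ⊕ Fin T))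
      ((Finset.univ.erase t).image Sum.inr) := by
    simp [Finset.disjoint_left]
  have hsum : ∑ q ∈ s, w q = ∑ i, u i + ∑ i, v i := by
    rw [hs, Finset.sum_union hdisj,
      Finset.sum_image (fun a _ b _ h => Sum.inl_injective h),
      Finset.sum_image (fun a _ b _ h => Sum.inr_injective h)]
    simp only [hw, Sum.elim_inl, Sum.elim_inr]
    rw [Finset.sum_erase _ hv]
  have hsumsq : ∑ q ∈ s, (w q)^2 ≤ ∑ i, (u i)^2 + ∑ i, (v i)^2 := by
    rw [hs, Finset.sum_union hdisj,
      Finset.sum_image (fun a _ b _ h => Sum.inl_injective h),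
      Finset.sum_image (fun a _ b _ h => Sum.inr_injective h)]
    simp only [hw, Sum.elim_inl, Sum.elim_inr]
    exact add_le_add le_rfl (Finset.sum_le_sum_of_subset_of_nonneg
      (Finset.erase_subset _ _) (fun i _ _ => sq_nonneg _))
  have hcard : (s.card : ℝ) = 2 * (T:ℝ) - 1 := by
    rw [hs, Finset.card_union_of_disjoint hdisj,
      Finset.card_image_of_injective _ Sum.inl_injective,
      Finset.card_image_of_injective _ Sum.inr_injective,
      Finset.card_erase_of_mem (Finset.mem_univ t)]
    simp only [Finset.card_univ, Fintype.card_fin]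
    push_cast [Nat.cast_sub hT]
    ring
  calc (∑ i, u i + ∑ i, v i) ^ 2 = (∑ q ∈ s, w q)^2 := by rw [hsum]
    _ ≤ (s.card : ℝ) * ∑ q ∈ s, (w q)^2 := sq_sum_le_card_mul_sum_sq
    _ ≤ (2 * (T:ℝ) - 1) * (∑ i, (u i)^2 + ∑ i, (v i)^2) := by
        rw [hcard]
        have h1 : (0:ℝ) ≤ 2 * (T:ℝ) - 1 := by
          have : (1:ℝ) ≤ (T:ℝ) := by exact_mod_cast hT
          linarith
        exact mul_le_mul_of_nonneg_left hsumsq h1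

lemma swm_pointwise {Ω : Type*} [MeasurableSpace Ω] (μ : Measure Ω) [IsProbabilityMeasure μ]
    {ι : Type*} [Fintype ι] (Y : ι → Ω → ℝ) (c : ι → ℝ)
    (hYmeas : ∀ q, Measurable (Y q)) (CY : ι → ℝ) (hYbd : ∀ q ω, |Y q ω| ≤ CY q)
    (hindep : ∀ q q', q ≠ q' → IndepFun (Y q) (Y q') μ)
    (d : ℝ) :
    ∫ ω, ((∑ q, c q * Y q ω) - d)^2 ∂μ
      ≤ (∑ q, (c q)^2 * (∫ ω, (Y q ω)^2 ∂μ)) + ((∑ q, c q * ∫ ω, Y q ω ∂μ) - d)^2 := by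
  classical
  set Z : ι → Ω → ℝ := fun q ω => c q * Y q ω with hZdef
  have hY2 : ∀ q, MemLp (Y q) 2 μ := fun q =>
    (memLp_top_of_bound (hYmeas q).aestronglyMeasurable (CY q)
      (Filter.Eventually.of_forall fun ω => by
        rw [Real.norm_eq_abs]; exact hYbd q ω)).mono_exponent le_top
  have hZ2 : ∀ q, MemLp (Z q) 2 μ := fun q => (hY2 q).const_mul (c q)
  have hW2 : MemLp (fun ω => ∑ q, Z q ω) 2 μ := by
    have := memLp_finsetSum' (μ := μ) (p := 2) Finset.univ (fun q (_ : q ∈ Finset.univ) => hZ2 q)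
    convert this using 1
    funext ω
    simp
  set W : Ω → ℝ := fun ω => ∑ q, Z q ω with hWdef
  have hWint : Integrable W μ := hW2.integrable one_le_two
  have hWsq : Integrable (fun ω => W ω ^ 2) μ := by
    have := hW2.integrable_sq
    exact this
  have hEW : ∫ ω, W ω ∂μ = ∑ q, c q * ∫ ω, Y q ω ∂μ := by
    rw [hWdef]
    rw [integral_finset_sum _ (fun q _ => ((hZ2 q).integrable one_le_two))]
    exact Finset.sum_congr rfl fun q _ => integral_const_mul _ _
  have hexp : ∫ ω, (W ω - d)^2 ∂μ
      = (∫ ω, W ω ^ 2 ∂μ) - 2 * d * (∫ ω, W ω ∂μ) + d^2 := by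
    have h1 : ∀ ω, (W ω - d)^2 = W ω ^ 2 - 2 * d * W ω + d^2 := fun ω => by ring
    simp_rw [h1]
    have hint1 : Integrable (fun ω => W ω ^ 2 - 2 * d * W ω) μ :=
      hWsq.sub (hWint.const_mul (2 * d))
    have hint2 : Integrable (fun ω => 2 * d * W ω) μ := hWint.const_mul (2 * d)
    rw [integral_add hint1 (integrable_const _), integral_sub hWsq hint2,
      integral_const_mul, integral_const]
    simp
  have hvarW : variance W μ = ∑ q, variance (Z q) μ := by
    have hps : Set.Pairwise ↑(Finset.univ : Finset ι)
        (fun q q' => IndepFun (Z q) (Z q') μ) := by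
      intro q _ q' _ hne
      exact (hindep q q' hne).comp (measurable_const_mul (c q)) (measurable_const_mul (c q'))
    have := IndepFun.variance_sum (μ := μ) (fun q (_ : q ∈ Finset.univ) => hZ2 q) hps
    rw [← this]
    congr 1
    funext ω
    simp [hWdef, hZdef]
  have hvarZ : ∀ q, variance (Z q) μ ≤ (c q)^2 * ∫ ω, (Y q ω)^2 ∂μ := by
    intro q
    rw [hZdef]
    rw [variance_const_mul (c q) (Y q) μ]
    have h2 := variance_eq_sub (hY2 q)
    have h3 : variance (Y q) μ ≤ ∫ ω, (Y q ω)^2 ∂μ := by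
      rw [h2]
      have h4 : μ[(Y q) ^ 2] = ∫ ω, (Y q ω)^2 ∂μ := by
        congr 1
      nlinarith [sq_nonneg (μ[Y q])]
    exact mul_le_mul_of_nonneg_left h3 (sq_nonneg _)
  have hvar' := variance_eq_sub hW2
  have hWsq_eq : μ[(fun ω => ∑ q, Z q ω) ^ 2] = ∫ ω, W ω ^ 2 ∂μ := by congr 1
  have hkey : ∫ ω, (W ω - d)^2 ∂μ = variance W μ + ((∫ ω, W ω ∂μ) - d)^2 := by
    rw [hexp, hvar', hWsq_eq]
    have h5 : μ[fun ω => ∑ q, Z q ω] = ∫ ω, W ω ∂μ := rfl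
    rw [h5]
    ring
  have hsum_le : variance W μ ≤ ∑ q, (c q)^2 * ∫ ω, (Y q ω)^2 ∂μ := by
    rw [hvarW]
    exact Finset.sum_le_sum fun q _ => hvarZ q
  calc ∫ ω, ((∑ q, c q * Y q ω) - d)^2 ∂μ = ∫ ω, (W ω - d)^2 ∂μ := rfl
    _ = variance W μ + ((∫ ω, W ω ∂μ) - d)^2 := hkey
    _ ≤ (∑ q, (c q)^2 * ∫ ω, (Y q ω)^2 ∂μ) + ((∑ q, c q * ∫ ω, Y q ω ∂μ) - d)^2 := by
        rw [hEW]
        exact add_le_add_left hsum_le _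

lemma swm_sigma_sum {T : ℕ} (nb : Fin T → ℕ) (f : Fin T → ℝ) :
    ∑ q : (i : Fin T) × Fin (nb i), f q.1 = ∑ i, (nb i : ℝ) * f i := by
  rw [← Finset.univ_sigma_univ, Finset.sum_sigma]
  simp [Finset.sum_const, Finset.card_univ, nsmul_eq_mul]

/-- **Finite-sample MISE bound for the sliding-window kernel density estimator**
(the non-asymptotic inequality underlying Theorem 1 of the paper). -/
theorem sliding_window_mise_upper_bound
    {Ω : Type*} [MeasurableSpace Ω] (μ : Measure Ω) [IsProbabilityMeasure μ]
    (T : ℕ) (hT : 0 < T)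
    (nb : Fin T → ℕ) (hnb : ∀ i, 0 < nb i)
    (p : Fin T → ℝ → ℝ) (hpmeas : ∀ i, Measurable (p i))
    (X : (i : Fin T) → Fin (nb i) → Ω → ℝ)
    (hXmeas : ∀ i j, Measurable (X i j))
    -- all the samples (within batches and across batches) are mutually independent
    (hindep : iIndepFun
      (fun q : (i : Fin T) × Fin (nb i) => X q.1 q.2) μ)
    -- each sample of batch `i` has density `p i` with respect to Lebesgue measure
    (hdist : ∀ i j, Measure.map (X i j) μ
      = volume.withDensity (fun x => ENNReal.ofReal (p i x)))
    (hppos : ∀ i x, 0 ≤ p i x) (hpint : ∀ i, ∫ x : ℝ, p i x = 1)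
    -- the kernel: bounded, measurable, integrable and square-integrable
    (K : ℝ → ℝ) (hKmeas : Measurable K) (hKbdd : ∃ C, ∀ x, |K x| ≤ C)
    (hKint : Integrable K) (hKsq : Integrable (fun x => (K x) ^ 2))
    -- bandwidths and weights
    (σ : Fin T → ℝ) (hσ : ∀ i, 0 < σ i)
    (α : Fin T → ℝ) (hα : ∀ i, 0 ≤ α i) (hαsum : ∑ i, α i = 1)
    -- square integrability assumptions
    (hpsq : ∀ i, Integrable (fun x => (p i x) ^ 2))
    (hconvsq : ∀ i, Integrable
      (fun x => (convKP (scaledKernel K (σ i)) (p i) x - p i x) ^ 2))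
    (hbsq : ∀ i, Integrable
      (fun x => (p i x - p (⟨T - 1, Nat.sub_lt hT Nat.one_pos⟩ : Fin T) x) ^ 2))
    -- the sliding-window kernel density estimator
    (hhat : ℝ → Ω → ℝ)
    (hhat_def : ∀ x ω, hhat x ω
      = ∑ i, α i * ((nb i : ℝ)⁻¹ * ∑ j, scaledKernel K (σ i) (x - X i j ω))) :
    (∫ x : ℝ, ∫ ω, (hhat x ω - p (⟨T - 1, Nat.sub_lt hT Nat.one_pos⟩ : Fin T) x) ^ 2 ∂μ)
      ≤ (∑ i, (α i) ^ 2 * Rquad K / ((nb i : ℝ) * σ i))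
        + (2 * (T : ℝ) - 1) * ∑ i, (α i) ^ 2
            * Rquad (fun x => p i x - p (⟨T - 1, Nat.sub_lt hT Nat.one_pos⟩ : Fin T) x)
        + (2 * (T : ℝ) - 1) * ∑ i, (α i) ^ 2
            * Rquad (fun x => convKP (scaledKernel K (σ i)) (p i) x - p i x) := by
  classical
  set t : Fin T := ⟨T - 1, Nat.sub_lt hT Nat.one_pos⟩ with ht
  obtain ⟨C, hC⟩ := hKbdd
  have hC0 : 0 ≤ C := le_trans (abs_nonneg _) (hC 0)
  have hkmeas : ∀ i, Measurable (scaledKernel K (σ i)) :=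
    fun i => swm_scaledKernel_meas hKmeas _
  have hkbd : ∀ i u, |scaledKernel K (σ i) u| ≤ C / σ i :=
    fun i => swm_scaledKernel_bound hC (hσ i)
  have hksq : ∀ i, Integrable (fun x => (scaledKernel K (σ i) x)^2) :=
    fun i => swm_integrable_sq_scaledKernel hKsq (hσ i)
  have hvarG : ∀ i, Integrable (fun x => ∫ y, (scaledKernel K (σ i) (x - y))^2 * p i y)
      ∧ (∫ x, ∫ y, (scaledKernel K (σ i) (x - y))^2 * p i y) = Rquad (scaledKernel K (σ i)) :=
    fun i => swm_var_term (hkmeas i) (hkbd i) (hksq i) (hpmeas i) (hppos i) (hpint i)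
  set G : Fin T → ℝ → ℝ :=
    fun i x => ∫ y, (scaledKernel K (σ i) (x - y))^2 * p i y with hGdef
  set conv : Fin T → ℝ → ℝ := fun i => convKP (scaledKernel K (σ i)) (p i) with hconvdef
  set nn : ℝ := 2 * (T : ℝ) - 1 with hnn
  -- the bound function
  set bnd : ℝ → ℝ := fun x =>
    (∑ i, (α i)^2 * (nb i : ℝ)⁻¹ * G i x)
      + (nn * ∑ i, (α i)^2 * (p i x - p t x)^2
        + nn * ∑ i, (α i)^2 * (conv i x - p i x)^2) with hbnd
  -- pointwise bound
  have hpt : ∀ x : ℝ, (∫ ω, (hhat x ω - p t x)^2 ∂μ) ≤ bnd x := by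
    intro x
    set Y : (i : Fin T) × Fin (nb i) → Ω → ℝ :=
      fun q ω => scaledKernel K (σ q.1) (x - X q.1 q.2 ω) with hY
    set c : (i : Fin T) × Fin (nb i) → ℝ := fun q => α q.1 * (nb q.1 : ℝ)⁻¹ with hc
    have hYmeas : ∀ q, Measurable (Y q) := fun q =>
      (hkmeas q.1).comp (measurable_const.sub (hXmeas q.1 q.2))
    have hYbd : ∀ q ω, |Y q ω| ≤ C / σ q.1 := fun q ω => hkbd q.1 _
    have hYindep : ∀ q q', q ≠ q' → IndepFun (Y q) (Y q') μ := by
      intro q q' hne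
      exact (hindep.indepFun hne).comp
        ((hkmeas q.1).comp (measurable_const.sub measurable_id))
        ((hkmeas q'.1).comp (measurable_const.sub measurable_id))
    have hhat_eq : ∀ ω, hhat x ω = ∑ q : (i : Fin T) × Fin (nb i), c q * Y q ω := by
      intro ω
      rw [hhat_def, ← Finset.univ_sigma_univ, Finset.sum_sigma]
      refine Finset.sum_congr rfl fun i _ => ?_
      rw [Finset.mul_sum, Finset.mul_sum]
      exact Finset.sum_congr rfl fun j _ => by rw [hc, hY]; ring
    have hEY : ∀ q : (i : Fin T) × Fin (nb i), ∫ ω, Y q ω ∂μ = conv q.1 x := by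
      intro q
      rw [hY]
      have := swm_expect_comp (hXmeas q.1 q.2) (hpmeas q.1) (hppos q.1) (hdist q.1 q.2)
        (fun y => scaledKernel K (σ q.1) (x - y))
        ((hkmeas q.1).comp (measurable_const.sub measurable_id))
      rw [this]
      rfl
    have hEY2 : ∀ q : (i : Fin T) × Fin (nb i), ∫ ω, (Y q ω)^2 ∂μ = G q.1 x := by
      intro q
      rw [hY]
      have := swm_expect_comp (hXmeas q.1 q.2) (hpmeas q.1) (hppos q.1) (hdist q.1 q.2)
        (fun y => (scaledKernel K (σ q.1) (x - y))^2)
        (((hkmeas q.1).comp (measurable_const.sub measurable_id)).pow_const 2)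
      rw [this]
    have hmain := swm_pointwise μ Y c hYmeas (fun q => C / σ q.1) hYbd hYindep (p t x)
    have hLHS : ∫ ω, (hhat x ω - p t x)^2 ∂μ
        = ∫ ω, ((∑ q, c q * Y q ω) - p t x)^2 ∂μ := by
      congr 1
      funext ω
      rw [hhat_eq ω]
    -- variance sum collapse
    have hvcol : (∑ q : (i : Fin T) × Fin (nb i), (c q)^2 * (∫ ω, (Y q ω)^2 ∂μ))
        = ∑ i, (α i)^2 * (nb i : ℝ)⁻¹ * G i x := by
      have h1 : (∑ q : (i : Fin T) × Fin (nb i), (c q)^2 * (∫ ω, (Y q ω)^2 ∂μ))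
          = ∑ q : (i : Fin T) × Fin (nb i), (fun i => (α i * (nb i : ℝ)⁻¹)^2 * G i x) q.1 := by
        refine Finset.sum_congr rfl fun q _ => ?_
        rw [hEY2 q, hc]
      rw [h1, swm_sigma_sum nb (fun i => (α i * (nb i : ℝ)⁻¹)^2 * G i x)]
      refine Finset.sum_congr rfl fun i _ => ?_
      have hne : (nb i : ℝ) ≠ 0 := Nat.cast_ne_zero.mpr (hnb i).ne'
      field_simp
    -- expectation sum collapse
    have hecol : (∑ q : (i : Fin T) × Fin (nb i), c q * ∫ ω, Y q ω ∂μ)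
        = ∑ i, α i * conv i x := by
      have h1 : (∑ q : (i : Fin T) × Fin (nb i), c q * ∫ ω, Y q ω ∂μ)
          = ∑ q : (i : Fin T) × Fin (nb i), (fun i => α i * (nb i : ℝ)⁻¹ * conv i x) q.1 := by
        refine Finset.sum_congr rfl fun q _ => ?_
        rw [hEY q, hc]
      rw [h1, swm_sigma_sum nb (fun i => α i * (nb i : ℝ)⁻¹ * conv i x)]
      refine Finset.sum_congr rfl fun i _ => ?_
      have hne : (nb i : ℝ) ≠ 0 := Nat.cast_ne_zero.mpr (hnb i).ne'
      field_simp
    -- bias bound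
    have hbias : ((∑ i, α i * conv i x) - p t x)^2
        ≤ nn * (∑ i, (α i)^2 * (conv i x - p i x)^2 + ∑ i, (α i)^2 * (p i x - p t x)^2) := by
      have hdecomp : (∑ i, α i * conv i x) - p t x
          = (∑ i, α i * (conv i x - p i x)) + ∑ i, α i * (p i x - p t x) := by
        rw [← Finset.sum_add_distrib]
        have h2 : ∀ i : Fin T, α i * (conv i x - p i x) + α i * (p i x - p t x)
            = α i * conv i x - α i * p t x := fun i => by ring
        simp_rw [h2]
        rw [Finset.sum_sub_distrib, ← Finset.sum_mul, hαsum, one_mul]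
      rw [hdecomp]
      have := swm_sq_sum t (fun i => α i * (conv i x - p i x))
        (fun i => α i * (p i x - p t x)) (by simp)
      calc ((∑ i, α i * (conv i x - p i x)) + ∑ i, α i * (p i x - p t x))^2
          ≤ (2 * (T:ℝ) - 1) * (∑ i, (α i * (conv i x - p i x))^2
              + ∑ i, (α i * (p i x - p t x))^2) := this
        _ = nn * (∑ i, (α i)^2 * (conv i x - p i x)^2 + ∑ i, (α i)^2 * (p i x - p t x)^2) := by
              rw [hnn]
              congr 1
              congr 1 <;> exact Finset.sum_congr rfl fun i _ => by ring
    rw [hLHS, hbnd]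
    calc ∫ ω, ((∑ q, c q * Y q ω) - p t x)^2 ∂μ
        ≤ (∑ q, (c q)^2 * (∫ ω, (Y q ω)^2 ∂μ)) + ((∑ q, c q * ∫ ω, Y q ω ∂μ) - p t x)^2 :=
          hmain
      _ = (∑ i, (α i)^2 * (nb i : ℝ)⁻¹ * G i x) + ((∑ i, α i * conv i x) - p t x)^2 := by
          rw [hvcol, hecol]
      _ ≤ (∑ i, (α i)^2 * (nb i : ℝ)⁻¹ * G i x)
          + (nn * ∑ i, (α i)^2 * (p i x - p t x)^2
            + nn * ∑ i, (α i)^2 * (conv i x - p i x)^2) := by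
          refine add_le_add le_rfl ?_
          calc ((∑ i, α i * conv i x) - p t x)^2
              ≤ nn * (∑ i, (α i)^2 * (conv i x - p i x)^2
                  + ∑ i, (α i)^2 * (p i x - p t x)^2) := hbias
            _ = nn * ∑ i, (α i)^2 * (p i x - p t x)^2
                + nn * ∑ i, (α i)^2 * (conv i x - p i x)^2 := by ring
  -- integrability of the bound
  have hnn0 : (0:ℝ) ≤ nn := by
    rw [hnn]
    have : (1:ℝ) ≤ (T:ℝ) := by exact_mod_cast hT
    linarith
  have hint1 : Integrable (fun x => ∑ i, (α i)^2 * (nb i : ℝ)⁻¹ * G i x) :=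
    integrable_finset_sum _ fun i _ => ((hvarG i).1.const_mul _)
  have hint2 : Integrable (fun x => nn * ∑ i, (α i)^2 * (p i x - p t x)^2) :=
    (integrable_finset_sum _ fun i _ => ((hbsq i).const_mul _)).const_mul nn
  have hint3 : Integrable (fun x => nn * ∑ i, (α i)^2 * (conv i x - p i x)^2) :=
    (integrable_finset_sum _ fun i _ => ((hconvsq i).const_mul _)).const_mul nn
  have hbint : Integrable bnd := hint1.add (hint2.add hint3)
  -- integral computations
  have hI1 : ∫ x, ∑ i, (α i)^2 * (nb i : ℝ)⁻¹ * G i x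
      = ∑ i, (α i)^2 * Rquad K / ((nb i : ℝ) * σ i) := by
    rw [integral_finset_sum _ fun i _ => ((hvarG i).1.const_mul _)]
    refine Finset.sum_congr rfl fun i _ => ?_
    rw [integral_const_mul, (hvarG i).2, swm_Rquad_scaledKernel (hσ i)]
    have hne : (nb i : ℝ) ≠ 0 := Nat.cast_ne_zero.mpr (hnb i).ne'
    field_simp
  have hI2 : ∫ x, nn * ∑ i, (α i)^2 * (p i x - p t x)^2
      = nn * ∑ i, (α i)^2 * Rquad (fun x => p i x - p t x) := by
    rw [integral_const_mul, integral_finset_sum _ fun i _ => ((hbsq i).const_mul _)]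
    congr 1
    exact Finset.sum_congr rfl fun i _ => by rw [integral_const_mul]; rfl
  have hI3 : ∫ x, nn * ∑ i, (α i)^2 * (conv i x - p i x)^2
      = nn * ∑ i, (α i)^2 * Rquad (fun x => conv i x - p i x) := by
    rw [integral_const_mul, integral_finset_sum _ fun i _ => ((hconvsq i).const_mul _)]
    congr 1
    exact Finset.sum_congr rfl fun i _ => by rw [integral_const_mul]; rfl
  have hbndint : ∫ x, bnd x
      = (∑ i, (α i)^2 * Rquad K / ((nb i : ℝ) * σ i))
        + (nn * ∑ i, (α i)^2 * Rquad (fun x => p i x - p t x)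
          + nn * ∑ i, (α i)^2 * Rquad (fun x => conv i x - p i x)) := by
    have hint23 : Integrable (fun x => nn * ∑ i, (α i)^2 * (p i x - p t x)^2
        + nn * ∑ i, (α i)^2 * (conv i x - p i x)^2) := hint2.add hint3
    rw [hbnd]
    rw [integral_add hint1 hint23, integral_add hint2 hint3, hI1, hI2, hI3]
  have hfinal : (∫ x, ∫ ω, (hhat x ω - p t x)^2 ∂μ) ≤ ∫ x, bnd x := by
    refine integral_mono_of_nonneg ?_ hbint ?_
    · exact ae_of_all _ fun x => integral_nonneg fun ω => sq_nonneg _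
    · exact ae_of_all _ hpt
  rw [hbndint] at hfinal
  calc (∫ x : ℝ, ∫ ω, (hhat x ω - p t x)^2 ∂μ)
      ≤ (∑ i, (α i)^2 * Rquad K / ((nb i : ℝ) * σ i))
        + (nn * ∑ i, (α i)^2 * Rquad (fun x => p i x - p t x)
          + nn * ∑ i, (α i)^2 * Rquad (fun x => conv i x - p i x)) := hfinal
    _ = (∑ i, (α i)^2 * Rquad K / ((nb i : ℝ) * σ i))
        + nn * ∑ i, (α i)^2 * Rquad (fun x => p i x - p t x)
        + nn * ∑ i, (α i)^2 * Rquad (fun x => conv i x - p i x) := by ring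
end

section
/- Let K : ℝ → ℝ be bounded and measurable with R(K) = ∫_ℝ K(z)² dz < ∞, and let p : ℝ → ℝ be a bounded probability density that is continuous at the point x ∈ ℝ. Then lim_{σ → 0⁺} σ·∫_ℝ K_σ(x − y)²·p(y) dy = R(K)·p(x). -/
open MeasureTheory Filter Real Topology

lemma change_of_var (K p : ℝ → ℝ) (x σ : ℝ) (hσ : 0 < σ) :
    σ * ∫ y : ℝ, (scaledKernel K σ (x - y)) ^ 2 * p y
      = ∫ z : ℝ, (K z) ^ 2 * p (x - σ * z) := by
  have h1 : (fun z : ℝ => (K z) ^ 2 * p (x - σ * z))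
      = fun z : ℝ => (fun y => (K ((x - y) / σ)) ^ 2 * p y) (x - σ * z) := by
    funext z
    have : (x - (x - σ * z)) / σ = z := by field_simp; ring
    show _ = K ((x - (x - σ * z)) / σ) ^ 2 * p (x - σ * z)
    rw [this]
  rw [h1]
  have h2 : ∫ z : ℝ, (fun y => (K ((x - y) / σ)) ^ 2 * p y) (x - σ * z)
      = |σ⁻¹| * ∫ t : ℝ, (fun y => (K ((x - y) / σ)) ^ 2 * p y) (x - t) := by
    have := MeasureTheory.Measure.integral_comp_mul_left
      (g := fun t => (fun y => (K ((x - y) / σ)) ^ 2 * p y) (x - t)) (a := σ)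
    simpa using this
  rw [h2, integral_sub_left_eq_self (fun y => (K ((x - y) / σ)) ^ 2 * p y) volume x]
  rw [abs_of_pos (inv_pos.mpr hσ)]
  simp only [scaledKernel]
  rw [← integral_const_mul, ← integral_const_mul]
  congr 1
  funext y
  field_simp

/-- **Asymptotics of the variance kernel term**: for a bounded measurable kernel
with `R(K) < ∞` and a bounded probability density `p` continuous at `x`,
`σ·∫ K_σ(x−y)²·p(y) dy → R(K)·p(x)` as `σ → 0⁺`. -/
theorem scaledKernel_sq_convolution_asymptotic
    (K : ℝ → ℝ) (hKmeas : Measurable K) (hKbdd : ∃ C, ∀ x, |K x| ≤ C)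
    (hKsq : Integrable (fun x => (K x) ^ 2))
    (p : ℝ → ℝ) (hpmeas : Measurable p) (hppos : ∀ x, 0 ≤ p x)
    (hpint : ∫ x : ℝ, p x = 1) (hpbdd : ∃ C, ∀ x, p x ≤ C)
    (x : ℝ) (hpcont : ContinuousAt p x) :
    Tendsto (fun σ : ℝ => σ * ∫ y : ℝ, (scaledKernel K σ (x - y)) ^ 2 * p y)
      (𝓝[>] 0) (𝓝 (Rquad K * p x)) := by
  obtain ⟨C, hC⟩ := hpbdd
  have hC0 : 0 ≤ C := le_trans (hppos x) (hC x)
  have key : Tendsto (fun σ : ℝ => ∫ z : ℝ, (K z) ^ 2 * p (x - σ * z))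
      (𝓝[>] 0) (𝓝 (∫ z : ℝ, (K z) ^ 2 * p x)) := by
    apply MeasureTheory.tendsto_integral_filter_of_dominated_convergence
      (bound := fun z => C * (K z) ^ 2)
    · filter_upwards with σ
      exact ((hKmeas.pow_const 2).mul
        (hpmeas.comp (measurable_const.sub (measurable_const.mul measurable_id)))).aestronglyMeasurable
    · filter_upwards with σ
      filter_upwards with z
      have h1 : |p (x - σ * z)| = p (x - σ * z) := abs_of_nonneg (hppos _)
      have : ‖(K z) ^ 2 * p (x - σ * z)‖ = (K z) ^ 2 * p (x - σ * z) := by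
        rw [norm_mul]
        simp [abs_of_nonneg (sq_nonneg (K z)), h1]
      rw [this, mul_comm C ((K z) ^ 2)]
      exact mul_le_mul_of_nonneg_left (hC _) (sq_nonneg _)
    · exact hKsq.const_mul C
    · filter_upwards with z
      have hlin : Tendsto (fun σ : ℝ => x - σ * z) (𝓝[>] 0) (𝓝 x) := by
        have : Tendsto (fun σ : ℝ => x - σ * z) (𝓝 (0:ℝ)) (𝓝 (x - 0 * z)) := by
          exact (tendsto_const_nhds.sub (tendsto_id.mul tendsto_const_nhds))
        simpa using this.mono_left nhdsWithin_le_nhds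
      exact (tendsto_const_nhds.mul (hpcont.tendsto.comp hlin))
  have heq : ∫ z : ℝ, (K z) ^ 2 * p x = Rquad K * p x := by
    rw [Rquad, ← integral_mul_const]
  rw [← heq]
  apply key.congr'
  filter_upwards [self_mem_nhdsWithin] with σ hσ
  exact (change_of_var K p x σ hσ).symm
end

section
/- Let K : ℝ → ℝ be a probability density (K ≥ 0, ∫_ℝ K = 1) with vanishing first moment ∫_ℝ z·K(z) dz = 0 and finite second moment μ₂(K) = ∫_ℝ z²·K(z) dz < ∞, and let p : ℝ → ℝ be twice differentiable with p'' continuous and bounded on ℝ. Then for every x ∈ ℝ, lim_{σ → 0⁺} [ (K_σ * p)(x) − p(x) ] / σ² = (1/2)·μ₂(K)·p''(x), where (K_σ * p)(x) = ∫_ℝ K_σ(x − y)·p(y) dy. -/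
open MeasureTheory Filter Real Topology

/-- **Second-order Taylor expansion of the smoothed density**: for a kernel `K`
that is a probability density with vanishing first moment and finite second
moment `μ₂(K)`, and `p` twice differentiable with `p''` continuous and bounded,
`[(K_σ ⋆ p)(x) − p(x)]/σ² → (1/2)·μ₂(K)·p''(x)` as `σ → 0⁺`. -/
theorem smoothed_density_taylor_expansion
    (K : ℝ → ℝ) (hKmeas : Measurable K) (hKpos : ∀ z, 0 ≤ K z)
    (hKint : Integrable K) (hKone : ∫ z : ℝ, K z = 1)
    (hKmom1_int : Integrable (fun z => z * K z))
    (hKmom1 : ∫ z : ℝ, z * K z = 0)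
    (hKmom2_int : Integrable (fun z => z ^ 2 * K z))
    (p p' p'' : ℝ → ℝ)
    (hp' : ∀ y, HasDerivAt p (p' y) y)
    (hp'' : ∀ y, HasDerivAt p' (p'' y) y)
    (hp''cont : Continuous p'') (hp''bdd : ∃ C, ∀ y, |p'' y| ≤ C)
    (x : ℝ) :
    Tendsto
      (fun σ : ℝ =>
        ((∫ y : ℝ, scaledKernel K σ (x - y) * p y) - p x) / σ ^ 2)
      (𝓝[>] 0)
      (𝓝 ((1 / 2) * (∫ z : ℝ, z ^ 2 * K z) * p'' x)) := by
  obtain ⟨C, hC⟩ := hp''bdd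
  have hC0 : 0 ≤ C := le_trans (abs_nonneg _) (hC x)
  have hp'cont : Continuous p' := by
    rw [continuous_iff_continuousAt]; exact fun y => (hp'' y).continuousAt
  -- the remainder function
  set R : ℝ → ℝ → ℝ := fun σ z => ∫ t in (0:ℝ)..1, (1 - t) * p'' (x + t * (-(σ * z))) with hRdef
  -- joint continuity of R
  have hRcont : Continuous (fun q : ℝ × ℝ => R q.1 q.2) := by
    have : ∀ σ z : ℝ, R σ z = ∫ t in Set.Icc (0:ℝ) 1, (1 - t) * p'' (x + t * (-(σ * z))) := by
      intro σ z
      rw [hRdef]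
      simp only
      rw [intervalIntegral.integral_of_le zero_le_one, ← integral_Icc_eq_integral_Ioc]
    simp only [this]
    exact continuous_parametric_integral_of_continuous (by fun_prop) isCompact_Icc
  -- value at σ = 0
  have hR0 : ∀ z, R 0 z = p'' x / 2 := by
    intro z
    rw [hRdef]
    simp only [zero_mul, neg_zero, mul_zero, add_zero]
    rw [intervalIntegral.integral_mul_const]
    norm_num [intervalIntegral.integral_sub intervalIntegrable_const
      intervalIntegral.intervalIntegrable_id]
    ring
  -- uniform bound
  have hRbdd : ∀ σ z, |R σ z| ≤ C := by
    intro σ z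
    have hb := intervalIntegral.norm_integral_le_of_norm_le_const
      (C := C) (f := fun t => (1 - t) * p'' (x + t * (-(σ * z)))) (a := (0:ℝ)) (b := 1) ?_
    · have h2 : |R σ z| ≤ C * |(1:ℝ) - 0| := hb
      simpa using h2
    · intro t ht
      rw [Set.uIoc_of_le zero_le_one] at ht
      have h1 : |1 - t| ≤ 1 := by
        rw [abs_le]; constructor <;> nlinarith [ht.1, ht.2]
      calc ‖(1 - t) * p'' (x + t * (-(σ * z)))‖ = |1 - t| * |p'' (x + t * (-(σ * z)))| :=
            abs_mul _ _
        _ ≤ 1 * C := mul_le_mul h1 (hC _) (abs_nonneg _) zero_le_one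
        _ = C := one_mul C
  -- Taylor expansion with integral remainder
  have taylor : ∀ h : ℝ,
      p (x + h) = p x + h * p' x + h ^ 2 * ∫ t in (0:ℝ)..1, (1 - t) * p'' (x + t * h) := by
    intro h
    have hline : ∀ t : ℝ, HasDerivAt (fun t : ℝ => x + t * h) h t := by
      intro t; simpa using ((hasDerivAt_id t).mul_const h).const_add x
    have hg' : ∀ t : ℝ, HasDerivAt (fun t => p (x + t * h)) (p' (x + t * h) * h) t :=
      fun t => (hp' (x + t * h)).comp t (hline t)
    have hg'' : ∀ t : ℝ, HasDerivAt (fun t => p' (x + t * h)) (p'' (x + t * h) * h) t :=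
      fun t => (hp'' (x + t * h)).comp t (hline t)
    have hu : ∀ t ∈ Set.uIcc (0:ℝ) 1, HasDerivAt (fun t : ℝ => 1 - t) (-1) t := by
      intro t _; simpa using (hasDerivAt_id t).const_sub 1
    have hcont2 : Continuous (fun t : ℝ => p'' (x + t * h) * h) := by fun_prop
    have hcont1 : Continuous (fun t : ℝ => p' (x + t * h)) := by fun_prop
    have ibp := intervalIntegral.integral_mul_deriv_eq_deriv_mul
      (u := fun t : ℝ => 1 - t) (u' := fun _ => (-1 : ℝ))
      (v := fun t => p' (x + t * h)) (v' := fun t => p'' (x + t * h) * h)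
      (a := 0) (b := 1) hu (fun t _ => hg'' t)
      (intervalIntegrable_const) (hcont2.intervalIntegrable _ _)
    have ftc : ∫ t in (0:ℝ)..1, p' (x + t * h) * h = p (x + h) - p x := by
      have := intervalIntegral.integral_eq_sub_of_hasDerivAt
        (a := (0:ℝ)) (b := 1) (f := fun t => p (x + t * h)) (f' := fun t => p' (x + t * h) * h)
        (fun t _ => hg' t) ((hcont1.mul continuous_const).intervalIntegrable _ _)
      simpa using this
    have hmc : ∫ t in (0:ℝ)..1, (-1 : ℝ) * p' (x + t * h)
        = -∫ t in (0:ℝ)..1, p' (x + t * h) := by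
      rw [intervalIntegral.integral_const_mul]; ring
    have key : h ^ 2 * ∫ t in (0:ℝ)..1, (1 - t) * p'' (x + t * h)
        = h * ∫ t in (0:ℝ)..1, (1 - t) * (p'' (x + t * h) * h) := by
      have e : (fun t : ℝ => h ^ 2 * ((1 - t) * p'' (x + t * h)))
          = fun t : ℝ => h * ((1 - t) * (p'' (x + t * h) * h)) := by funext t; ring
      rw [← intervalIntegral.integral_const_mul, ← intervalIntegral.integral_const_mul, e]
    have hInt : ∫ t in (0:ℝ)..1, p' (x + t * h) * h
        = h * ∫ t in (0:ℝ)..1, p' (x + t * h) := by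
      rw [← intervalIntegral.integral_const_mul]
      congr 1; funext t; ring
    rw [key, ibp, hmc]
    rw [hInt] at ftc
    norm_num
    linear_combination -ftc
  -- pointwise Taylor identity
  have keyT : ∀ σ z : ℝ, p (x - σ * z)
      = p x + (-(σ * z)) * p' x + (σ * z) ^ 2 * R σ z := by
    intro σ z
    have := taylor (-(σ * z))
    rw [hRdef]
    simp only
    rw [show x + -(σ * z) = x - σ * z by ring] at this
    rw [this]
    ring
  -- measurability helpers
  have hz2K : AEStronglyMeasurable (fun z : ℝ => z ^ 2 * K z) volume :=
    ((measurable_id.pow_const 2).mul hKmeas).aestronglyMeasurable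
  have hRz : ∀ σ, Continuous fun z => R σ z := by
    intro σ
    exact hRcont.comp (continuous_const.prodMk continuous_id)
  have hIR : ∀ σ : ℝ, Integrable (fun z => R σ z * (z ^ 2 * K z)) := by
    intro σ
    exact hKmom2_int.bdd_mul (c := C) (hRz σ).aestronglyMeasurable
      (ae_of_all _ fun z => by simpa using hRbdd σ z)
  -- the main identity for σ > 0
  have main : ∀ σ : ℝ, 0 < σ →
      ((∫ y : ℝ, scaledKernel K σ (x - y) * p y) - p x) / σ ^ 2
        = ∫ z, R σ z * (z ^ 2 * K z) := by
    intro σ hσ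
    have hσ0 : σ ≠ 0 := ne_of_gt hσ
    -- change of variables
    have h1 : (∫ y : ℝ, scaledKernel K σ (x - y) * p y)
        = ∫ u : ℝ, (1 / σ) * K (u / σ) * p (x - u) := by
      rw [← integral_sub_left_eq_self (fun u => (1 / σ) * K (u / σ) * p (x - u)) volume x]
      simp [scaledKernel]
    have h2 : (∫ u : ℝ, (1 / σ) * K (u / σ) * p (x - u))
        = ∫ z : ℝ, K z * p (x - σ * z) := by
      have hcv := MeasureTheory.Measure.integral_comp_mul_left
        (fun u => (1 / σ) * K (u / σ) * p (x - u)) σ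
      rw [abs_of_pos (inv_pos.mpr hσ), smul_eq_mul] at hcv
      have hsimp : (fun z : ℝ => 1 / σ * K (σ * z / σ) * p (x - σ * z))
          = fun z : ℝ => σ⁻¹ * (K z * p (x - σ * z)) := by
        funext z; rw [mul_div_cancel_left₀ _ hσ0]; field_simp
      rw [hsimp, MeasureTheory.integral_const_mul] at hcv
      exact (mul_left_cancel₀ (inv_ne_zero hσ0) hcv).symm
    -- splitting the integral
    have i1 : Integrable (fun z : ℝ => K z * p x) := hKint.mul_const _
    have i2 : Integrable (fun z : ℝ => (-(σ) * p' x) * (z * K z)) := hKmom1_int.const_mul _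
    have i3 : Integrable (fun z : ℝ => σ ^ 2 * (R σ z * (z ^ 2 * K z))) := (hIR σ).const_mul _
    have hsplit : (∫ z : ℝ, K z * p (x - σ * z))
        = (∫ z : ℝ, K z * p x) + (∫ z : ℝ, (-(σ) * p' x) * (z * K z))
          + ∫ z : ℝ, σ ^ 2 * (R σ z * (z ^ 2 * K z)) := by
      have e : (fun z : ℝ => K z * p (x - σ * z))
          = fun z : ℝ => (K z * p x + (-(σ) * p' x) * (z * K z))
              + σ ^ 2 * (R σ z * (z ^ 2 * K z)) := by
        funext z; rw [keyT σ z]; ring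
      have i12 : Integrable (fun z : ℝ => K z * p x + (-(σ) * p' x) * (z * K z)) :=
        i1.add i2
      rw [e, integral_add i12 i3, integral_add i1 i2]
    have e1 : (∫ z : ℝ, K z * p x) = p x := by
      rw [MeasureTheory.integral_mul_const, hKone, one_mul]
    have e2 : (∫ z : ℝ, (-(σ) * p' x) * (z * K z)) = 0 := by
      rw [MeasureTheory.integral_const_mul, hKmom1, mul_zero]
    have e3 : (∫ z : ℝ, σ ^ 2 * (R σ z * (z ^ 2 * K z)))
        = σ ^ 2 * ∫ z : ℝ, R σ z * (z ^ 2 * K z) := MeasureTheory.integral_const_mul _ _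
    rw [h1, h2, hsplit, e1, e2, e3]
    field_simp
    ring
  -- dominated convergence
  have hlim : Tendsto (fun σ : ℝ => ∫ z, R σ z * (z ^ 2 * K z)) (𝓝[>] 0)
      (𝓝 (∫ z, (p'' x / 2) * (z ^ 2 * K z))) := by
    apply tendsto_integral_filter_of_dominated_convergence
      (bound := fun z => C * (z ^ 2 * K z))
    · filter_upwards with σ
      exact ((hRz σ).aestronglyMeasurable.mul hz2K)
    · filter_upwards with σ
      filter_upwards with z
      rw [norm_mul]
      have hn : ‖z ^ 2 * K z‖ = z ^ 2 * K z := by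
        rw [Real.norm_eq_abs, abs_of_nonneg (mul_nonneg (sq_nonneg z) (hKpos z))]
      rw [hn]
      exact mul_le_mul_of_nonneg_right (by simpa using hRbdd σ z)
        (mul_nonneg (sq_nonneg z) (hKpos z))
    · exact hKmom2_int.const_mul C
    · filter_upwards with z
      have : Tendsto (fun σ : ℝ => R σ z) (𝓝[>] 0) (𝓝 (p'' x / 2)) := by
        rw [← hR0 z]
        exact ((hRcont.comp (continuous_id.prodMk continuous_const)).tendsto 0).mono_left
          nhdsWithin_le_nhds
      exact this.mul tendsto_const_nhds
  have hval : (∫ z, (p'' x / 2) * (z ^ 2 * K z))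
      = (1 / 2) * (∫ z : ℝ, z ^ 2 * K z) * p'' x := by
    rw [MeasureTheory.integral_const_mul]; ring
  rw [hval] at hlim
  apply hlim.congr'
  filter_upwards [self_mem_nhdsWithin] with σ hσ
  exact (main σ hσ).symm
end

section
/- Let K : ℝ → ℝ be a bounded probability density with R(K) < ∞. For each n ∈ ℕ, let ĥ_n be a sliding-window kernel density estimator built from T mutually independent batches, where batch i has size n_i(n), bandwidth σ_i(n) > 0, and nonnegative weights α_i(n) summing to 1 over i, and each batch consists of i.i.d. samples from a bounded probability density p_i, with p_T continuous at the point x ∈ ℝ. Assume that as n → ∞: σ_i(n) → 0 and n_i(n)·σ_i(n) → ∞ for every i, α_i(n) → 0 for every i < T, and α_T(n) → 1. Then E[(ĥ_n(x) − p_T(x))²] → 0, and consequently for every ε > 0, P( |ĥ_n(x) − p_T(x)|² > ε ) → 0 as n → ∞. -/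
open MeasureTheory ProbabilityTheory Filter Real Topology
open scoped NNReal ENNReal

lemma takde_sub_scale (G q : ℝ → ℝ) (x : ℝ) {σ : ℝ} (hσ : 0 < σ) :
    (∫ y : ℝ, G ((x - y) / σ) * q y) = σ * ∫ u : ℝ, G u * q (x - σ * u) := by
  have hne : σ ≠ 0 := ne_of_gt hσ
  have h1 : (∫ y : ℝ, G ((x - y) / σ) * q y)
      = ∫ v : ℝ, G (v / σ) * q (x - v) := by
    rw [← MeasureTheory.integral_sub_left_eq_self (fun v => G (v / σ) * q (x - v)) volume x]
    simp [sub_sub_cancel]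
  have h2 : (∫ u : ℝ, G (σ * u / σ) * q (x - σ * u))
      = |σ⁻¹| • ∫ v : ℝ, G (v / σ) * q (x - v) :=
    MeasureTheory.Measure.integral_comp_mul_left (fun v => G (v / σ) * q (x - v)) σ
  simp only [mul_div_cancel_left₀ _ hne, smul_eq_mul,
    abs_of_pos (inv_pos.mpr hσ)] at h2
  rw [h1, h2]
  field_simp

/-- **Corollary 2 (weak pointwise consistency of TAKDE)**: if the bandwidths
satisfy `σ_i(n) → 0`, `n_i(n)·σ_i(n) → ∞`, and the weights concentrate on the
current batch (`α_i(n) → 0` for `i < T`, `α_T(n) → 1`), then the mean squared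
error of the sliding-window estimator at a continuity point `x` of `p_T`
vanishes, and hence `P(|ĥ_n(x) − p_T(x)|² > ε) → 0` for every `ε > 0`. -/
theorem takde_pointwise_consistency
    {Ω : Type*} [MeasurableSpace Ω] (μ : Measure Ω) [IsProbabilityMeasure μ]
    (T : ℕ) (hT : 0 < T)
    -- the kernel: a bounded probability density with `R(K) < ∞`
    (K : ℝ → ℝ) (hKmeas : Measurable K) (hKpos : ∀ z, 0 ≤ K z)
    (hKint : Integrable K) (hKone : ∫ z : ℝ, K z = 1)
    (hKbdd : ∃ C, ∀ z, K z ≤ C) (hKsq : Integrable (fun z => (K z) ^ 2))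
    -- the batch densities: bounded probability densities
    (p : Fin T → ℝ → ℝ) (hpmeas : ∀ i, Measurable (p i))
    (hppos : ∀ i y, 0 ≤ p i y) (hpint : ∀ i, ∫ y : ℝ, p i y = 1)
    (hpbdd : ∀ i, ∃ C, ∀ y, p i y ≤ C)
    (x : ℝ)
    (hpcont : ContinuousAt (p (⟨T - 1, Nat.sub_lt hT Nat.one_pos⟩ : Fin T)) x)
    -- for each n: batch sizes, bandwidths, weights, and samples
    (nb : ℕ → Fin T → ℕ) (hnb : ∀ n i, 0 < nb n i)
    (σ : ℕ → Fin T → ℝ) (hσ : ∀ n i, 0 < σ n i)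
    (α : ℕ → Fin T → ℝ) (hα : ∀ n i, 0 ≤ α n i) (hαsum : ∀ n, ∑ i, α n i = 1)
    (X : (n : ℕ) → (i : Fin T) → Fin (nb n i) → Ω → ℝ)
    (hXmeas : ∀ n i j, Measurable (X n i j))
    (hindep : ∀ n, iIndepFun
      (fun q : (i : Fin T) × Fin (nb n i) => X n q.1 q.2) μ)
    (hdist : ∀ n i j, Measure.map (X n i j) μ
      = volume.withDensity (fun y => ENNReal.ofReal (p i y)))
    -- asymptotic assumptions
    (hσ0 : ∀ i, Tendsto (fun n => σ n i) atTop (𝓝 0))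
    (hnσ : ∀ i, Tendsto (fun n => (nb n i : ℝ) * σ n i) atTop atTop)
    (hα0 : ∀ i : Fin T, i ≠ (⟨T - 1, Nat.sub_lt hT Nat.one_pos⟩ : Fin T) →
      Tendsto (fun n => α n i) atTop (𝓝 0))
    (hα1 : Tendsto (fun n => α n (⟨T - 1, Nat.sub_lt hT Nat.one_pos⟩ : Fin T))
      atTop (𝓝 1))
    -- the sliding-window estimators
    (hhat : ℕ → Ω → ℝ)
    (hhat_def : ∀ n ω, hhat n ω
      = ∑ i, α n i * ((nb n i : ℝ)⁻¹ * ∑ j, scaledKernel K (σ n i) (x - X n i j ω))) :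
    Tendsto
      (fun n => ∫ ω,
        (hhat n ω - p (⟨T - 1, Nat.sub_lt hT Nat.one_pos⟩ : Fin T) x) ^ 2 ∂μ)
      atTop (𝓝 0)
    ∧ ∀ ε : ℝ, 0 < ε →
        Tendsto
          (fun n => μ {ω |
            ε < |hhat n ω - p (⟨T - 1, Nat.sub_lt hT Nat.one_pos⟩ : Fin T) x| ^ 2})
          atTop (𝓝 0) := by
  classical
  set t : Fin T := ⟨T - 1, Nat.sub_lt hT Nat.one_pos⟩ with ht
  set c : ℝ := p t x with hc
  obtain ⟨CK, hCK⟩ := hKbdd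
  choose Cp hCp using hpbdd
  have hCp0 : ∀ i, 0 ≤ Cp i := fun i => (hppos i 0).trans (hCp i 0)
  set RK : ℝ := ∫ z : ℝ, (K z) ^ 2 with hRK
  have hRK0 : 0 ≤ RK := integral_nonneg fun z => sq_nonneg _
  -- kernel map, measurability and bounds
  have hkermeas : ∀ n (i : Fin T), Measurable fun v : ℝ => scaledKernel K (σ n i) (x - v) := by
    intro n i
    exact measurable_const.mul
      (hKmeas.comp ((measurable_const.sub measurable_id).div_const _))
  have hker_nonneg : ∀ n (i : Fin T) (v : ℝ), 0 ≤ scaledKernel K (σ n i) v := by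
    intro n i v
    exact mul_nonneg (div_nonneg zero_le_one (hσ n i).le) (hKpos _)
  have hker_le : ∀ n (i : Fin T) (v : ℝ), scaledKernel K (σ n i) v ≤ (1 / σ n i) * CK := by
    intro n i v
    exact mul_le_mul_of_nonneg_left (hCK _) (div_nonneg zero_le_one (hσ n i).le)
  set f : (n : ℕ) → (i : Fin T) → Fin (nb n i) → Ω → ℝ :=
    fun n i j ω => scaledKernel K (σ n i) (x - X n i j ω) with hfdef
  have hfmeas : ∀ n i j, Measurable (f n i j) := fun n i j =>
    (hkermeas n i).comp (hXmeas n i j)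
  have hfmem : ∀ n i j, MemLp (f n i j) 2 μ := by
    intro n i j
    refine MemLp.of_bound (hfmeas n i j).aestronglyMeasurable ((1 / σ n i) * CK)
      (ae_of_all _ fun ω => ?_)
    rw [Real.norm_eq_abs, abs_of_nonneg (hker_nonneg n i _)]
    exact hker_le n i _
  -- law transfer
  have hlaw : ∀ n i j (φ : ℝ → ℝ), Measurable φ →
      ∫ ω, φ (X n i j ω) ∂μ = ∫ y : ℝ, p i y * φ y := by
    intro n i j φ hφ
    rw [← integral_map (hXmeas n i j).aemeasurable hφ.aestronglyMeasurable, hdist n i j]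
    have heq : (fun y : ℝ => ENNReal.ofReal (p i y))
        = fun y : ℝ => (((fun y : ℝ => (p i y).toNNReal) y : ℝ≥0) : ℝ≥0∞) := rfl
    rw [heq, integral_withDensity_eq_integral_smul (hpmeas i).real_toNNReal φ]
    congr 1
    funext y
    simp [NNReal.smul_def, Real.coe_toNNReal _ (hppos i y)]
  -- means and second moments
  set m : ℕ → Fin T → ℝ := fun n i => ∫ u : ℝ, K u * p i (x - σ n i * u) with hmdef
  set s2 : ℕ → Fin T → ℝ := fun n i => ∫ u : ℝ, (K u) ^ 2 * p i (x - σ n i * u) with hs2def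
  have hmean : ∀ n i j, ∫ ω, f n i j ω ∂μ = m n i := by
    intro n i j
    rw [show (∫ ω, f n i j ω ∂μ)
        = ∫ ω, (fun v => scaledKernel K (σ n i) (x - v)) (X n i j ω) ∂μ from rfl,
      hlaw n i j _ (hkermeas n i)]
    have heq : (fun y : ℝ => p i y * scaledKernel K (σ n i) (x - y))
        = fun y : ℝ => (σ n i)⁻¹ * (K ((x - y) / σ n i) * p i y) := by
      funext y; simp only [scaledKernel]; ring
    rw [heq, integral_const_mul, takde_sub_scale K (p i) x (hσ n i), ← mul_assoc,
      inv_mul_cancel₀ (ne_of_gt (hσ n i)), one_mul]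
  have hsecond : ∀ n i j, ∫ ω, (f n i j ω) ^ 2 ∂μ = (σ n i)⁻¹ * s2 n i := by
    intro n i j
    rw [show (∫ ω, (f n i j ω) ^ 2 ∂μ)
        = ∫ ω, (fun v => (scaledKernel K (σ n i) (x - v)) ^ 2) (X n i j ω) ∂μ from rfl,
      hlaw n i j _ ((hkermeas n i).pow_const 2)]
    have heq : (fun y : ℝ => p i y * (scaledKernel K (σ n i) (x - y)) ^ 2)
        = fun y : ℝ => ((σ n i)⁻¹) ^ 2 * ((fun z => (K z) ^ 2) ((x - y) / σ n i) * p i y) := by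
      funext y; simp only [scaledKernel]; ring
    rw [heq, integral_const_mul, takde_sub_scale (fun z => (K z) ^ 2) (p i) x (hσ n i)]
    have : (σ n i)⁻¹ ^ 2 * σ n i = (σ n i)⁻¹ := by
      rw [sq, mul_assoc, inv_mul_cancel₀ (ne_of_gt (hσ n i)), mul_one]
    rw [← mul_assoc, this]
  -- integrability of substituted integrands
  have hcompmeas : ∀ n (i : Fin T), Measurable fun u : ℝ => p i (x - σ n i * u) :=
    fun n i => (hpmeas i).comp (measurable_const.sub (measurable_id.const_mul _))
  have hint_m : ∀ n i, Integrable (fun u : ℝ => K u * p i (x - σ n i * u)) := by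
    intro n i
    have := hKint.bdd_mul (hcompmeas n i).aestronglyMeasurable
      (c := Cp i) (ae_of_all _ fun u => by
        rw [Real.norm_eq_abs, abs_of_nonneg (hppos i _)]; exact hCp i _)
    simpa [mul_comm] using this
  have hint_s2 : ∀ n i, Integrable (fun u : ℝ => (K u) ^ 2 * p i (x - σ n i * u)) := by
    intro n i
    have := hKsq.bdd_mul (hcompmeas n i).aestronglyMeasurable
      (c := Cp i) (ae_of_all _ fun u => by
        rw [Real.norm_eq_abs, abs_of_nonneg (hppos i _)]; exact hCp i _)
    simpa [mul_comm] using this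
  have hm_nonneg : ∀ n i, 0 ≤ m n i := fun n i =>
    integral_nonneg fun u => mul_nonneg (hKpos u) (hppos i _)
  have hm_le : ∀ n i, m n i ≤ Cp i := by
    intro n i
    calc m n i ≤ ∫ u : ℝ, Cp i * K u := by
          refine integral_mono (hint_m n i) (hKint.const_mul _) fun u => ?_
          rw [mul_comm (Cp i) (K u)]
          exact mul_le_mul_of_nonneg_left (hCp i _) (hKpos u)
      _ = Cp i := by rw [integral_const_mul, hKone, mul_one]
  have hs2_le : ∀ n i, s2 n i ≤ Cp i * RK := by
    intro n i
    calc s2 n i ≤ ∫ u : ℝ, Cp i * (K u) ^ 2 := by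
          refine integral_mono (hint_s2 n i) (hKsq.const_mul _) fun u => ?_
          rw [mul_comm (Cp i) _]
          exact mul_le_mul_of_nonneg_left (hCp i _) (sq_nonneg _)
      _ = Cp i * RK := by rw [integral_const_mul]
  -- variance bound for a single kernel variable
  have hvarf : ∀ n i j, variance (f n i j) μ ≤ (σ n i)⁻¹ * (Cp i * RK) := by
    intro n i j
    calc variance (f n i j) μ
        = (∫ ω, (f n i j ω) ^ 2 ∂μ) - (∫ ω, f n i j ω ∂μ) ^ 2 := by
          rw [variance_eq_sub (hfmem n i j)]; rfl
      _ ≤ ∫ ω, (f n i j ω) ^ 2 ∂μ := sub_le_self _ (sq_nonneg _)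
      _ = (σ n i)⁻¹ * s2 n i := hsecond n i j
      _ ≤ (σ n i)⁻¹ * (Cp i * RK) :=
          mul_le_mul_of_nonneg_left (hs2_le n i) (inv_nonneg.mpr (hσ n i).le)
  -- the estimator as a sum over the sigma type
  have hhat_eq : ∀ n, hhat n
      = ∑ q : (i : Fin T) × Fin (nb n i), (α n q.1 * (nb n q.1 : ℝ)⁻¹) • f n q.1 q.2 := by
    intro n
    funext ω
    rw [hhat_def n ω]
    simp only [Finset.sum_apply, Pi.smul_apply, smul_eq_mul]
    rw [← Finset.univ_sigma_univ, Finset.sum_sigma]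
    refine Finset.sum_congr rfl fun i _ => ?_
    simp only [Finset.mul_sum]
    exact Finset.sum_congr rfl fun j _ => by ring
  have hhatmem : ∀ n, MemLp (hhat n) 2 μ := by
    intro n
    rw [hhat_eq n]
    exact memLp_finset_sum' _ fun q _ => (hfmem n q.1 q.2).const_smul _
  -- expectation of the estimator
  have hEhat : ∀ n, ∫ ω, hhat n ω ∂μ = ∑ i, α n i * m n i := by
    intro n
    rw [hhat_eq n]
    simp only [Finset.sum_apply, Pi.smul_apply, smul_eq_mul]
    rw [integral_finset_sum _ fun q _ =>
      ((hfmem n q.1 q.2).integrable one_le_two).const_mul _]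
    have : ∀ q : (i : Fin T) × Fin (nb n i),
        ∫ ω, (α n q.1 * (nb n q.1 : ℝ)⁻¹) * f n q.1 q.2 ω ∂μ
          = α n q.1 * (nb n q.1 : ℝ)⁻¹ * m n q.1 := by
      intro q; rw [integral_const_mul, hmean n q.1 q.2]
    rw [Finset.sum_congr rfl fun q _ => this q, ← Finset.univ_sigma_univ, Finset.sum_sigma]
    refine Finset.sum_congr rfl fun i _ => ?_
    show (∑ _j : Fin (nb n i), α n i * (nb n i : ℝ)⁻¹ * m n i) = α n i * m n i
    rw [Finset.sum_const, Finset.card_univ, Fintype.card_fin, nsmul_eq_mul]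
    have hnbne : ((nb n i : ℝ)) ≠ 0 := Nat.cast_ne_zero.mpr (hnb n i).ne'
    field_simp
  -- variance of the estimator
  have hαle1 : ∀ n i, α n i ≤ 1 := by
    intro n i
    rw [← hαsum n]
    exact Finset.single_le_sum (fun j _ => hα n j) (Finset.mem_univ i)
  have hvar_le : ∀ n, variance (hhat n) μ
      ≤ ∑ i, Cp i * RK / ((nb n i : ℝ) * σ n i) := by
    intro n
    rw [hhat_eq n]
    have hφ : ∀ r : (i : Fin T) × Fin (nb n i),
        Measurable fun v : ℝ => (α n r.1 * (nb n r.1 : ℝ)⁻¹) * scaledKernel K (σ n r.1) (x - v) :=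
      fun r => measurable_const.mul (hkermeas n r.1)
    have hpair : Set.Pairwise
        (↑(Finset.univ : Finset ((i : Fin T) × Fin (nb n i))))
        (fun q q' : (i : Fin T) × Fin (nb n i) => IndepFun
          ((α n q.1 * (nb n q.1 : ℝ)⁻¹) • f n q.1 q.2)
          ((α n q'.1 * (nb n q'.1 : ℝ)⁻¹) • f n q'.1 q'.2) μ) :=
      fun q _ q' _ hne => ((hindep n).indepFun hne).comp (hφ q) (hφ q')
    rw [IndepFun.variance_sum
      (X := fun q : (i : Fin T) × Fin (nb n i) => (α n q.1 * (nb n q.1 : ℝ)⁻¹) • f n q.1 q.2)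
      (fun q _ => (hfmem n q.1 q.2).const_smul _) hpair]
    calc (∑ q : (i : Fin T) × Fin (nb n i),
            variance ((α n q.1 * (nb n q.1 : ℝ)⁻¹) • f n q.1 q.2) μ)
        = ∑ q : (i : Fin T) × Fin (nb n i),
            (α n q.1 * (nb n q.1 : ℝ)⁻¹) ^ 2 * variance (f n q.1 q.2) μ := by
          exact Finset.sum_congr rfl fun q _ => variance_smul _ _ _
      _ ≤ ∑ q : (i : Fin T) × Fin (nb n i),
            (α n q.1 * (nb n q.1 : ℝ)⁻¹) ^ 2 * ((σ n q.1)⁻¹ * (Cp q.1 * RK)) := by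
          exact Finset.sum_le_sum fun q _ =>
            mul_le_mul_of_nonneg_left (hvarf n q.1 q.2) (sq_nonneg _)
      _ = ∑ i, (nb n i : ℝ) * ((α n i * (nb n i : ℝ)⁻¹) ^ 2 * ((σ n i)⁻¹ * (Cp i * RK))) := by
          rw [← Finset.univ_sigma_univ, Finset.sum_sigma]
          refine Finset.sum_congr rfl fun i _ => ?_
          show (∑ _j : Fin (nb n i), (α n i * (nb n i : ℝ)⁻¹) ^ 2 * ((σ n i)⁻¹ * (Cp i * RK)))
            = (nb n i : ℝ) * ((α n i * (nb n i : ℝ)⁻¹) ^ 2 * ((σ n i)⁻¹ * (Cp i * RK)))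
          rw [Finset.sum_const, Finset.card_univ, Fintype.card_fin, nsmul_eq_mul]
      _ ≤ ∑ i, Cp i * RK / ((nb n i : ℝ) * σ n i) := by
          refine Finset.sum_le_sum fun i _ => ?_
          have hnb0 : (0:ℝ) < (nb n i : ℝ) := Nat.cast_pos.mpr (hnb n i)
          have hnbne' : ((nb n i : ℝ)) ≠ 0 := hnb0.ne'
          have hσne' : σ n i ≠ 0 := (hσ n i).ne'
          have key : (nb n i : ℝ) * ((α n i * (nb n i : ℝ)⁻¹) ^ 2 * ((σ n i)⁻¹ * (Cp i * RK)))
              = (α n i) ^ 2 * (Cp i * RK / ((nb n i : ℝ) * σ n i)) := by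
            field_simp
          rw [key]
          have hD : 0 ≤ Cp i * RK / ((nb n i : ℝ) * σ n i) :=
            div_nonneg (mul_nonneg (hCp0 i) hRK0) (mul_nonneg hnb0.le (hσ n i).le)
          have : (α n i) ^ 2 ≤ 1 := by
            have := hα n i
            have := hαle1 n i
            nlinarith
          nlinarith
  -- MSE decomposition
  have hMSE : ∀ n, ∫ ω, (hhat n ω - c) ^ 2 ∂μ
      = variance (hhat n) μ + ((∫ ω, hhat n ω ∂μ) - c) ^ 2 := by
    intro n
    have hY := hhatmem n
    have hint1 : Integrable (hhat n) μ := hY.integrable one_le_two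
    have hint2 : Integrable (fun ω => hhat n ω ^ 2) μ := hY.integrable_sq
    have expand : (fun ω => (hhat n ω - c) ^ 2)
        = fun ω => (hhat n ω ^ 2 - 2 * c * hhat n ω) + c ^ 2 := by
      funext ω; ring
    have ha : Integrable (fun ω => hhat n ω ^ 2 - 2 * c * hhat n ω) μ :=
      hint2.sub (hint1.const_mul (2 * c))
    rw [expand, integral_add ha (integrable_const _),
      integral_sub hint2 (hint1.const_mul (2 * c)), integral_const_mul, integral_const]
    have hvd := variance_eq_sub hY
    have h2 : μ[(hhat n) ^ 2] = ∫ ω, hhat n ω ^ 2 ∂μ := rfl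
    have h3 : μ[hhat n] = ∫ ω, hhat n ω ∂μ := rfl
    rw [h2, h3] at hvd
    have hkey : ∫ ω, hhat n ω ^ 2 ∂μ = variance (hhat n) μ + (∫ ω, hhat n ω ∂μ) ^ 2 := by
      linarith
    rw [hkey]
    simp [measure_univ]
    try ring
  -- bias convergence
  have hmt : Tendsto (fun n => m n t) atTop (𝓝 c) := by
    have hc' : c = ∫ u : ℝ, K u * c := by rw [integral_mul_const, hKone, one_mul]
    rw [hc']
    refine tendsto_integral_of_dominated_convergence (fun u => Cp t * K u)
      (fun n => (hKmeas.mul (hcompmeas n t)).aestronglyMeasurable)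
      (hKint.const_mul _) (fun n => ae_of_all _ fun u => ?_) (ae_of_all _ fun u => ?_)
    · show ‖K u * p t (x - σ n t * u)‖ ≤ Cp t * K u
      rw [Real.norm_eq_abs, abs_of_nonneg (mul_nonneg (hKpos u) (hppos t _)),
        mul_comm (Cp t) (K u)]
      exact mul_le_mul_of_nonneg_left (hCp t _) (hKpos u)
    · have h1 : Tendsto (fun n => x - σ n t * u) atTop (𝓝 x) := by
        have h2 := (hσ0 t).mul_const u
        rw [zero_mul] at h2
        simpa using tendsto_const_nhds.sub h2
      exact tendsto_const_nhds.mul (hpcont.tendsto.comp h1)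
  have hbias : Tendsto (fun n => ∑ i, α n i * m n i) atTop (𝓝 c) := by
    have key : Tendsto (fun n => ∑ i, α n i * m n i) atTop
        (𝓝 (∑ i, if i = t then c else 0)) := by
      refine tendsto_finset_sum _ fun i _ => ?_
      by_cases hi : i = t
      · subst hi
        simp only [if_pos rfl]
        simpa using hα1.mul hmt
      · simp only [if_neg hi]
        refine squeeze_zero (fun n => mul_nonneg (hα n i) (hm_nonneg n i))
          (fun n => mul_le_mul_of_nonneg_left (hm_le n i) (hα n i)) ?_
        simpa using (hα0 i hi).mul_const (Cp i)
    simpa [Finset.sum_ite_eq'] using key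
  -- variance convergence
  have hvb : Tendsto (fun n => ∑ i, Cp i * RK / ((nb n i : ℝ) * σ n i)) atTop (𝓝 0) := by
    have h0 : (0:ℝ) = ∑ _i : Fin T, 0 := by simp
    rw [h0]
    refine tendsto_finset_sum _ fun i _ => ?_
    have h1 : Tendsto (fun n => ((nb n i : ℝ) * σ n i)⁻¹) atTop (𝓝 0) :=
      (hnσ i).inv_tendsto_atTop
    simpa [div_eq_mul_inv] using h1.const_mul (Cp i * RK)
  have hvar0 : Tendsto (fun n => variance (hhat n) μ) atTop (𝓝 0) :=
    squeeze_zero (fun n => variance_nonneg _ _) hvar_le hvb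
  -- main convergence
  have hbias' : Tendsto (fun n => ∫ ω, hhat n ω ∂μ) atTop (𝓝 c) := by
    simpa only [hEhat] using hbias
  have hmain : Tendsto (fun n => ∫ ω, (hhat n ω - c) ^ 2 ∂μ) atTop (𝓝 0) := by
    have h2 : Tendsto (fun n => ((∫ ω, hhat n ω ∂μ) - c) ^ 2) atTop (𝓝 0) := by
      have h3 := (hbias'.sub_const c).pow 2
      norm_num at h3
      exact h3
    simp only [hMSE]
    simpa using hvar0.add h2
  refine ⟨hmain, ?_⟩
  intro ε hε
  have hZint : ∀ n, Integrable (fun ω => (hhat n ω - c) ^ 2) μ := fun n =>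
    ((hhatmem n).sub (memLp_const c)).integrable_sq
  have hmark : ∀ n, (μ {ω | ε < |hhat n ω - c| ^ 2}).toReal
      ≤ (∫ ω, (hhat n ω - c) ^ 2 ∂μ) / ε := by
    intro n
    have h1 := mul_meas_ge_le_integral_of_nonneg
      (ae_of_all μ fun ω => sq_nonneg (hhat n ω - c)) (hZint n) ε
    have hsub : {ω | ε < |hhat n ω - c| ^ 2} ⊆ {ω | ε ≤ (hhat n ω - c) ^ 2} := by
      intro ω hω
      simp only [Set.mem_setOf_eq, sq_abs] at hω ⊢
      exact hω.le
    have h2 : (μ {ω | ε < |hhat n ω - c| ^ 2}).toReal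
        ≤ (μ {ω | ε ≤ (hhat n ω - c) ^ 2}).toReal :=
      ENNReal.toReal_mono (measure_ne_top μ _) (measure_mono hsub)
    rw [le_div_iff₀ hε]
    calc (μ {ω | ε < |hhat n ω - c| ^ 2}).toReal * ε
        ≤ (μ {ω | ε ≤ (hhat n ω - c) ^ 2}).toReal * ε :=
          mul_le_mul_of_nonneg_right h2 hε.le
      _ = ε * (μ {ω | ε ≤ (hhat n ω - c) ^ 2}).toReal := mul_comm _ _
      _ ≤ ∫ ω, (hhat n ω - c) ^ 2 ∂μ := h1
  have htoReal : Tendsto (fun n => (μ {ω | ε < |hhat n ω - c| ^ 2}).toReal) atTop (𝓝 0) := by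
    refine squeeze_zero (fun n => ENNReal.toReal_nonneg) hmark ?_
    simpa using hmain.div_const ε
  have hfin := ENNReal.tendsto_ofReal htoReal
  rw [ENNReal.ofReal_zero] at hfin
  exact hfin.congr fun n => ENNReal.ofReal_toReal (measure_ne_top μ _)
end
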